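/- Let {R_{i_1}+u_1, ..., R_{i_t}+u_t} be an admissible family of components of the q-ary Hamming code H_{q,m} of length n = (q^m−1)/(q−1) (i.e., the cosets are pairwise disjoint, each R_{i_s} being the principal i_s-component and u_s ∈ H_{q,m}), and let σ_1,...,σ_t be permutations of F_q. Then C = (H_{q,m} \ ∪_s (R_{i_s}+u_s)) ∪ (∪_s σ_s(R_{i_s}+u_s)) is a q-ary 1-perfect code of length n. -/

import Mathlib

set_option linter.unusedSectionVars false
set_option linter.unusedVariables false
set_option maxHeartbeats 1000000


variable {F : Type*} [Field F] [Fintype F] [DecidableEq F] {m n : ℕ}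

/-- The linear code with parity-check columns `h`. -/
def parityCheckCode (h : Fin n → Fin m → F) : Submodule F (Fin n → F) where
  carrier := {x | ∑ j, x j • h j = 0}
  add_mem' := by
    intro a b ha hb
    simp only [Set.mem_setOf_eq, Pi.add_apply, add_smul, Finset.sum_add_distrib] at *
    simp [ha, hb]
  zero_mem' := by simp
  smul_mem' := by
    intro c a ha
    simp only [Set.mem_setOf_eq, Pi.smul_apply, smul_eq_mul, mul_smul] at *
    rw [← Finset.smul_sum, ha, smul_zero]

/-- The submodule of vectors supported inside the coordinate set `l`. -/
def supportedIn (l : Set (Fin n)) : Submodule F (Fin n → F) where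
  carrier := {u | ∀ j ∉ l, u j = 0}
  add_mem' := by intro a b ha hb j hj; simp [ha j hj, hb j hj]
  zero_mem' := by intro j hj; simp
  smul_mem' := by intro c a ha j hj; simp [ha j hj]

/-- The principal `i`-component `R_i`: span of all triples (codewords of
weight 3) with a `1` in coordinate `i`. -/
def principalComponent (h : Fin n → Fin m → F) (i : Fin n) : Submodule F (Fin n → F) :=
  Submodule.span F {u | u ∈ parityCheckCode h ∧ hammingNorm u = 3 ∧ u i = 1}

/-- The line of `PG_{m−1}(q)` through the points `a` and `b`, viewed as a set
of coordinates: `k` is on the line iff `h_k` is in the span of `h_a, h_b`. -/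
def lineThrough (h : Fin n → Fin m → F) (a b : Fin n) : Set (Fin n) :=
  {k | h k ∈ Submodule.span F {h a, h b}}


/-- Apply the permutation `σ` of the alphabet to the `i`-th coordinate. -/
def applyAt (i : Fin n) (σ : Equiv.Perm F) (x : Fin n → F) : Fin n → F :=
  Function.update x i (σ (x i))

/-- The coset `R_i + u` of the principal `i`-component, as a set. -/
def componentCoset (h : Fin n → Fin m → F) (i : Fin n) (u : Fin n → F) :
    Set (Fin n → F) :=
  {w | ∃ r ∈ principalComponent h i, w = r + u}

section Aux
variable {h : Fin n → Fin m → F}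

lemma hammingNorm_eq (x : Fin n → F) :
    hammingNorm x = (Finset.univ.filter (x · ≠ 0)).card := rfl

lemma sum_support_eq (x : Fin n → F) :
    ∑ j, x j • h j = ∑ j ∈ Finset.univ.filter (x · ≠ 0), x j • h j := by
  refine (Finset.sum_subset (Finset.filter_subset _ _) ?_).symm
  intro j _ hj
  simp only [Finset.mem_filter, Finset.mem_univ, true_and, not_not] at hj
  simp [hj]

lemma minweight (hnz : ∀ j, h j ≠ 0) (hnp : ∀ j k, j ≠ k → ∀ c : F, h j ≠ c • h k)
    {v : Fin n → F} (hv : v ∈ parityCheckCode h) (hv0 : v ≠ 0) : 3 ≤ hammingNorm v := by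
  by_contra hlt
  push_neg at hlt
  rw [hammingNorm_eq] at hlt
  set S := Finset.univ.filter (v · ≠ 0) with hS
  have hsum : ∑ j ∈ S, v j • h j = 0 := (sum_support_eq v) ▸ hv
  have hcard : S.card ≤ 2 := by omega
  interval_cases hc : S.card
  · have : v = 0 := by
      funext j
      by_contra hj
      have hj' : j ∈ S := by simp [hS]; exact hj
      simp [Finset.card_eq_zero.mp hc] at hj'
    exact hv0 this
  · obtain ⟨a, ha⟩ := Finset.card_eq_one.mp hc
    have hva : v a ≠ 0 := by
      have : a ∈ S := by simp [ha]
      simpa [hS] using this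
    rw [ha, Finset.sum_singleton] at hsum
    exact hnz a (by simpa [hva] using (smul_eq_zero.mp hsum))
  · obtain ⟨a, b, hab, hab2⟩ := Finset.card_eq_two.mp hc
    have hva : v a ≠ 0 := by
      have : a ∈ S := by simp [hab2]
      simpa [hS] using this
    have hvb : v b ≠ 0 := by
      have : b ∈ S := by simp [hab2]
      simpa [hS] using this
    rw [hab2, Finset.sum_pair hab] at hsum
    have key : h a = ((v a)⁻¹ * (-(v b))) • h b := by
      have h1 : v a • h a = -(v b • h b) := eq_neg_of_add_eq_zero_left hsum
      calc h a = (v a)⁻¹ • (v a • h a) := by rw [smul_smul, inv_mul_cancel₀ hva, one_smul]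
        _ = ((v a)⁻¹ * (-(v b))) • h b := by rw [h1, mul_smul, ← neg_smul]
    exact hnp a b hab _ key

lemma hammingNorm_eq_three {w : Fin n → F} {a b c : Fin n} (hab : a ≠ b) (hac : a ≠ c)
    (hbc : b ≠ c) (hsupp : ∀ k, w k ≠ 0 ↔ (k = a ∨ k = b ∨ k = c)) : hammingNorm w = 3 := by
  rw [hammingNorm_eq]
  have : Finset.univ.filter (w · ≠ 0) = {a, b, c} := by
    ext k; simp [hsupp k]
  rw [this, Finset.card_insert_of_notMem (by simp [hab, hac]),
    Finset.card_insert_of_notMem (by simp [hbc]), Finset.card_singleton]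

lemma hammingNorm_le_two {w : Fin n → F} {a b : Fin n}
    (hsupp : ∀ k, k ≠ a → k ≠ b → w k = 0) : hammingNorm w ≤ 2 := by
  rw [hammingNorm_eq]
  refine le_trans (Finset.card_le_card (t := {a, b}) ?_) ?_
  · intro k hk
    simp only [Finset.mem_filter, Finset.mem_univ, true_and] at hk
    by_contra hcon
    simp only [Finset.mem_insert, Finset.mem_singleton] at hcon
    push_neg at hcon
    exact hk (hsupp k hcon.1 hcon.2)
  · exact le_trans (Finset.card_insert_le _ _) (by simp)

/-- the triple-supported vector -/
def tri (i a j : Fin n) (α β γ : F) : Fin n → F :=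
  fun k => (if k = i then α else 0) + (if k = a then β else 0) + (if k = j then γ else 0)

lemma tri_sum (i a j : Fin n) (α β γ : F) :
    ∑ k, tri i a j α β γ k • h k = α • h i + β • h a + γ • h j := by
  simp only [tri, add_smul, Finset.sum_add_distrib, ite_smul, zero_smul]
  rw [Finset.sum_ite_eq' Finset.univ i (fun k => α • h k),
    Finset.sum_ite_eq' Finset.univ a (fun k => β • h k),
    Finset.sum_ite_eq' Finset.univ j (fun k => γ • h k)]
  simp

lemma wt4_split (hnz : ∀ j, h j ≠ 0) (hnp : ∀ j k, j ≠ k → ∀ c : F, h j ≠ c • h k)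
    (hcover : ∀ z : Fin m → F, z ≠ 0 → ∃ j, ∃ c : F, z = c • h j)
    {v : Fin n → F} (hv : v ∈ parityCheckCode h) (h4 : hammingNorm v = 4)
    {i i' : Fin n} (hii : i ≠ i') (hvi : v i ≠ 0) (hvi' : v i' ≠ 0) :
    ∃ w, w ∈ parityCheckCode h ∧ hammingNorm w = 3 ∧ w i ≠ 0 ∧
      (v - w) ∈ parityCheckCode h ∧ hammingNorm (v - w) = 3 ∧ (v - w) i' ≠ 0 := by
  classical
  set S := Finset.univ.filter (v · ≠ 0) with hS
  have hiS : i ∈ S := by simp [hS, hvi]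
  have hi'S : i' ∈ S := by simp [hS, hvi']
  have hcard2 : (S \ ({i, i'} : Finset (Fin n))).card = 2 := by
    rw [Finset.card_sdiff_of_subset (by intro k hk; simp at hk; rcases hk with rfl | rfl <;> assumption)]
    rw [Finset.card_pair hii, ← hammingNorm_eq, h4]
  obtain ⟨a, b, hab, habs⟩ := Finset.card_eq_two.mp hcard2
  have haS : a ∈ S ∧ a ∉ ({i, i'} : Finset (Fin n)) := by
    have : a ∈ S \ ({i, i'} : Finset (Fin n)) := by rw [habs]; simp
    exact Finset.mem_sdiff.mp this
  have hbS : b ∈ S ∧ b ∉ ({i, i'} : Finset (Fin n)) := by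
    have : b ∈ S \ ({i, i'} : Finset (Fin n)) := by rw [habs]; simp
    exact Finset.mem_sdiff.mp this
  have hva : v a ≠ 0 := by have := haS.1; simpa [hS] using this
  have hvb : v b ≠ 0 := by have := hbS.1; simpa [hS] using this
  have hai : a ≠ i := by intro e; exact absurd (by simp [e]) haS.2
  have hai' : a ≠ i' := by intro e; exact absurd (by simp [e]) haS.2
  have hbi : b ≠ i := by intro e; exact absurd (by simp [e]) hbS.2
  have hbi' : b ≠ i' := by intro e; exact absurd (by simp [e]) hbS.2
  have hSeq : ∀ k, v k ≠ 0 ↔ (k = i ∨ k = i' ∨ k = a ∨ k = b) := by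
    intro k
    constructor
    · intro hk
      by_contra hcon
      push_neg at hcon
      obtain ⟨h1, h2, h3, h4'⟩ := hcon
      have hkS : k ∈ S \ ({i, i'} : Finset (Fin n)) := by
        simp [hS, Finset.mem_sdiff, hk, h1, h2]
      rw [habs] at hkS; simp [h3, h4'] at hkS
    · rintro (rfl | rfl | rfl | rfl) <;> assumption
  set z := v i • h i + v a • h a with hz
  have hzne : z ≠ 0 := by
    intro h0
    have h1 : v i • h i = -(v a • h a) := eq_neg_of_add_eq_zero_left h0
    have : h i = ((v i)⁻¹ * (-(v a))) • h a := by
      calc h i = (v i)⁻¹ • (v i • h i) := by rw [smul_smul, inv_mul_cancel₀ hvi, one_smul]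
        _ = ((v i)⁻¹ * (-(v a))) • h a := by rw [h1, mul_smul, ← neg_smul]
    exact hnp i a (Ne.symm hai) _ this
  obtain ⟨j, c, hjc⟩ := hcover z hzne
  have hc0 : c ≠ 0 := by rintro rfl; rw [zero_smul] at hjc; exact hzne hjc
  rw [hz] at hjc
  have hji : j ≠ i := by
    intro e
    rw [e] at hjc
    have h1 : v a • h a = (c - v i) • h i := by
      rw [sub_smul]; linear_combination (norm := module) hjc
    have h2 : h a = ((v a)⁻¹ * (c - v i)) • h i := by
      calc h a = (v a)⁻¹ • (v a • h a) := by rw [smul_smul, inv_mul_cancel₀ hva, one_smul]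
        _ = _ := by rw [h1, mul_smul]
    exact hnp a i hai _ h2
  have hja : j ≠ a := by
    intro e
    rw [e] at hjc
    have h1 : v i • h i = (c - v a) • h a := by
      rw [sub_smul]; linear_combination (norm := module) hjc
    have h2 : h i = ((v i)⁻¹ * (c - v a)) • h a := by
      calc h i = (v i)⁻¹ • (v i • h i) := by rw [smul_smul, inv_mul_cancel₀ hvi, one_smul]
        _ = _ := by rw [h1, mul_smul]
    exact hnp i a (Ne.symm hai) _ h2
  set w := tri i a j (v i) (v a) (-c) with hwdef
  have hwcode : w ∈ parityCheckCode h := by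
    show ∑ k, w k • h k = 0
    rw [hwdef, tri_sum]
    linear_combination (norm := module) hjc
  have hw_i : w i = v i := by simp [hwdef, tri, Ne.symm hai, Ne.symm hji]
  have hw_a : w a = v a := by simp [hwdef, tri, hai, Ne.symm hja]
  have hw_j : w j = -c := by simp [hwdef, tri, hji, hja]
  have hw_other : ∀ k, k ≠ i → k ≠ a → k ≠ j → w k = 0 := by
    intro k h1 h2 h3; simp [hwdef, tri, h1, h2, h3]
  have hw2code : v - w ∈ parityCheckCode h := (parityCheckCode h).sub_mem hv hwcode
  have hji' : j ≠ i' := by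
    intro e
    have hne : v - w ≠ 0 := by
      intro h0
      have hb0 : v b - w b = 0 := by rw [← Pi.sub_apply, h0]; rfl
      rw [hw_other b hbi (fun e2 => hab e2.symm) (by rw [e]; exact hbi')] at hb0
      simp at hb0; exact hvb hb0
    have hle : hammingNorm (v - w) ≤ 2 := by
      apply hammingNorm_le_two (a := i') (b := b)
      intro k hk1 hk2
      by_cases hki : k = i
      · subst hki; simp [hw_i]
      by_cases hka : k = a
      · subst hka; simp [hw_a]
      have hvk : v k = 0 := by
        by_contra hvk
        rcases (hSeq k).mp hvk with e2 | e2 | e2 | e2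
        exacts [hki e2, hk1 e2, hka e2, hk2 e2]
      have hwk : w k = 0 := hw_other k hki hka (fun e2 => hk1 (e2.trans e))
      simp [hvk, hwk]
    exact absurd (minweight hnz hnp hw2code hne) (by omega)
  have hjb : j ≠ b := by
    intro e
    have hne : v - w ≠ 0 := by
      intro h0
      have hb0 : v i' - w i' = 0 := by rw [← Pi.sub_apply, h0]; rfl
      rw [hw_other i' (Ne.symm hii) (Ne.symm hai') (fun e2 => hji' e2.symm)] at hb0
      simp at hb0; exact hvi' hb0
    have hle : hammingNorm (v - w) ≤ 2 := by
      apply hammingNorm_le_two (a := i') (b := b)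
      intro k hk1 hk2
      by_cases hki : k = i
      · subst hki; simp [hw_i]
      by_cases hka : k = a
      · subst hka; simp [hw_a]
      have hvk : v k = 0 := by
        by_contra hvk
        rcases (hSeq k).mp hvk with e2 | e2 | e2 | e2
        exacts [hki e2, hk1 e2, hka e2, hk2 e2]
      have hwk : w k = 0 := hw_other k hki hka (fun e2 => hk2 (e2.trans e))
      simp [hvk, hwk]
    exact absurd (minweight hnz hnp hw2code hne) (by omega)
  have hvj : v j = 0 := by
    by_contra hvj
    rcases (hSeq j).mp hvj with e | e | e | e
    exacts [hji e, hji' e, hja e, hjb e]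
  have hwi'0 : w i' = 0 := hw_other i' (Ne.symm hii) (Ne.symm hai') (Ne.symm hji')
  refine ⟨w, hwcode, ?_, by rw [hw_i]; exact hvi, hw2code, ?_, ?_⟩
  · apply hammingNorm_eq_three (a := i) (b := a) (c := j) (Ne.symm hai) (Ne.symm hji)
      (Ne.symm hja)
    intro k
    constructor
    · intro hk
      by_contra hcon
      push_neg at hcon
      exact hk (hw_other k hcon.1 hcon.2.1 hcon.2.2)
    · rintro (rfl | rfl | rfl)
      · rw [hw_i]; exact hvi
      · rw [hw_a]; exact hva
      · rw [hw_j]; simpa using hc0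
  · apply hammingNorm_eq_three (a := i') (b := b) (c := j) hbi'.symm (Ne.symm hji')
      (Ne.symm hjb)
    intro k
    constructor
    · intro hk
      by_contra hcon
      push_neg at hcon
      obtain ⟨h1, h2, h3⟩ := hcon
      apply hk
      by_cases hki : k = i
      · subst hki; simp [hw_i]
      by_cases hka : k = a
      · subst hka; simp [hw_a]
      have hvk : v k = 0 := by
        by_contra hvk
        rcases (hSeq k).mp hvk with e | e | e | e
        exacts [hki e, h1 e, hka e, h2 e]
      simp [hvk, hw_other k hki hka h3]
    · intro hk
      rcases hk with e | e | e
      · rw [e]; simp [hwi'0]; exact hvi'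
      · rw [e]
        have hwb : w b = 0 := hw_other b hbi (fun e2 => hab e2.symm) (Ne.symm hjb)
        simp [hwb]; exact hvb
      · rw [e]; simp [hvj, hw_j]; exact hc0
  · simp [hwi'0]; exact hvi'



end Aux

section Keys
variable {h : Fin n → Fin m → F}

lemma principal_le_code (i : Fin n) : principalComponent h i ≤ parityCheckCode h :=
  Submodule.span_le.mpr (fun _ hx => hx.1)

lemma coset_subset_code {i : Fin n} {u : Fin n → F} (hu : u ∈ parityCheckCode h) :
    componentCoset h i u ⊆ (parityCheckCode h : Set (Fin n → F)) := by
  rintro w ⟨r, hr, rfl⟩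
  exact (parityCheckCode h).add_mem (principal_le_code i hr) hu

lemma wt3_mem_principal {i : Fin n} {v : Fin n → F} (hv : v ∈ parityCheckCode h)
    (hw : hammingNorm v = 3) (hvi : v i ≠ 0) : v ∈ principalComponent h i := by
  have h1 : (v i)⁻¹ • v ∈ {u | u ∈ parityCheckCode h ∧ hammingNorm u = 3 ∧ u i = 1} := by
    refine ⟨(parityCheckCode h).smul_mem _ hv, ?_, by simp [inv_mul_cancel₀ hvi]⟩
    rw [hammingNorm_smul (fun _ => smul_right_injective F (inv_ne_zero hvi)) v, hw]
  have h2 : (v i)⁻¹ • v ∈ principalComponent h i := Submodule.subset_span h1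
  have := (principalComponent h i).smul_mem (v i) h2
  rwa [smul_smul, mul_inv_cancel₀ hvi, one_smul] at this

lemma coset_add_mem {i : Fin n} {u x v : Fin n → F} (hx : x ∈ componentCoset h i u)
    (hv : v ∈ principalComponent h i) : x + v ∈ componentCoset h i u := by
  obtain ⟨r, hr, rfl⟩ := hx
  exact ⟨r + v, (principalComponent h i).add_mem hr hv, by abel⟩

lemma hammingNorm_neg (v : Fin n → F) : hammingNorm (-v) = hammingNorm v := by
  rw [hammingNorm_eq, hammingNorm_eq]
  congr 1; ext k; simp

/-- Key lemma A: underlying words of distinct disjoint cosets differ in at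
least 3 coordinates outside both special coordinates. -/
lemma keyA (hnz : ∀ j, h j ≠ 0) (hnp : ∀ j k, j ≠ k → ∀ c : F, h j ≠ c • h k)
    (hcover : ∀ z : Fin m → F, z ≠ 0 → ∃ j, ∃ c : F, z = c • h j)
    {i i' : Fin n} {u u' : Fin n → F} (hu : u ∈ parityCheckCode h)
    (hu' : u' ∈ parityCheckCode h)
    (hdisj : Disjoint (componentCoset h i u) (componentCoset h i' u'))
    {x y : Fin n → F} (hx : x ∈ componentCoset h i u) (hy : y ∈ componentCoset h i' u') :
    3 ≤ ((Finset.univ.filter fun j => x j ≠ y j) \ ({i, i'} : Finset (Fin n))).card := by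
  classical
  have hxc : x ∈ parityCheckCode h := coset_subset_code hu hx
  have hyc : y ∈ parityCheckCode h := coset_subset_code hu' hy
  set v := y - x with hv
  have hxy : x ≠ y := by
    rintro rfl
    exact Set.disjoint_left.mp hdisj hx hy
  have hv0 : v ≠ 0 := sub_ne_zero_of_ne (Ne.symm hxy)
  have hvc : v ∈ parityCheckCode h := (parityCheckCode h).sub_mem hyc hxc
  have hN3 : 3 ≤ hammingNorm v := minweight hnz hnp hvc hv0
  have claim1 : ¬(hammingNorm v = 3 ∧ v i ≠ 0) := by
    rintro ⟨h3, hvi⟩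
    have hyC : y ∈ componentCoset h i u := by
      have := coset_add_mem hx (wt3_mem_principal hvc h3 hvi)
      simpa [hv] using this
    exact Set.disjoint_left.mp hdisj hyC hy
  have claim2 : ¬(hammingNorm v = 3 ∧ v i' ≠ 0) := by
    rintro ⟨h3, hvi'⟩
    have hnv : -v ∈ parityCheckCode h := (parityCheckCode h).neg_mem hvc
    have hxC : x ∈ componentCoset h i' u' := by
      have := coset_add_mem hy (wt3_mem_principal hnv (by rw [hammingNorm_neg, h3])
        (by simp [hvi']))
      simpa [hv] using this
    exact Set.disjoint_left.mp hdisj hx hxC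
  have hfilter : (Finset.univ.filter fun j => x j ≠ y j) =
      (Finset.univ.filter (v · ≠ 0)) := by
    congr 1; ext k
    simp [hv, sub_ne_zero, ne_comm]
  rw [hfilter]
  set S := Finset.univ.filter (v · ≠ 0) with hS
  have hcardS : S.card = hammingNorm v := rfl
  by_cases h5 : 5 ≤ hammingNorm v
  · have h1 : S.card - ({i, i'} : Finset (Fin n)).card ≤ (S \ ({i, i'} : Finset (Fin n))).card :=
      Finset.le_card_sdiff _ _
    have h2 : ({i, i'} : Finset (Fin n)).card ≤ 2 :=
      le_trans (Finset.card_insert_le _ _) (by simp)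
    omega
  · interval_cases hNv : (hammingNorm v)
    · -- weight 3
      have hvi : v i = 0 := by
        by_contra hvi; exact claim1 ⟨rfl, hvi⟩
      have hvi' : v i' = 0 := by
        by_contra hvi'; exact claim2 ⟨rfl, hvi'⟩
      have : S \ ({i, i'} : Finset (Fin n)) = S := by
        apply Finset.sdiff_eq_self_of_disjoint
        rw [Finset.disjoint_right]
        intro k hk
        simp only [Finset.mem_insert, Finset.mem_singleton] at hk
        rcases hk with rfl | rfl <;> simp [hS, hvi, hvi']
      rw [this]; omega
    · -- weight 4
      by_cases hvi : v i = 0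
      · have hsub : S \ ({i'} : Finset (Fin n)) ⊆ S \ ({i, i'} : Finset (Fin n)) := by
          intro k hk
          simp only [Finset.mem_sdiff, Finset.mem_singleton, Finset.mem_insert] at hk ⊢
          refine ⟨hk.1, ?_⟩
          rintro (rfl | rfl)
          · have := hk.1; simp [hS, hvi] at this
          · exact hk.2 rfl
        have h1 : S.card - 1 ≤ (S \ ({i'} : Finset (Fin n))).card := by
          have := Finset.le_card_sdiff ({i'} : Finset (Fin n)) S
          simpa using this
        have := Finset.card_le_card hsub
        omega
      · by_cases hvi' : v i' = 0
        · have hsub : S \ ({i} : Finset (Fin n)) ⊆ S \ ({i, i'} : Finset (Fin n)) := by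
            intro k hk
            simp only [Finset.mem_sdiff, Finset.mem_singleton, Finset.mem_insert] at hk ⊢
            refine ⟨hk.1, ?_⟩
            rintro (rfl | rfl)
            · exact hk.2 rfl
            · have := hk.1; simp [hS, hvi'] at this
          have h1 : S.card - 1 ≤ (S \ ({i} : Finset (Fin n))).card := by
            have := Finset.le_card_sdiff ({i} : Finset (Fin n)) S
            simpa using this
          have := Finset.card_le_card hsub
          omega
        · by_cases hii : i = i'
          · subst hii
            have : ({i, i} : Finset (Fin n)) = {i} := by simp
            rw [this]
            have h1 : S.card - 1 ≤ (S \ ({i} : Finset (Fin n))).card := by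
              have := Finset.le_card_sdiff ({i} : Finset (Fin n)) S
              simpa using this
            omega
          · exfalso
            obtain ⟨w, hwc, hw3, hwi, hw2c, hw23, hw2i'⟩ :=
              wt4_split hnz hnp hcover hvc hNv hii hvi hvi'
            have hxw : x + w ∈ componentCoset h i u :=
              coset_add_mem hx (wt3_mem_principal hwc hw3 hwi)
            have hxw' : x + w ∈ componentCoset h i' u' := by
              have hneg : -(v - w) ∈ principalComponent h i' :=
                (principalComponent h i').neg_mem
                  (wt3_mem_principal hw2c hw23 hw2i')
              have := coset_add_mem hy hneg
              have he : y + -(v - w) = x + w := by rw [hv]; abel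
              rwa [he] at this
            exact Set.disjoint_left.mp hdisj hxw hxw'

/-- Key lemma B: a coset word and a codeword outside the coset differ in at
least 3 coordinates outside the special coordinate. -/
lemma keyB (hnz : ∀ j, h j ≠ 0) (hnp : ∀ j k, j ≠ k → ∀ c : F, h j ≠ c • h k)
    {i : Fin n} {u : Fin n → F} (hu : u ∈ parityCheckCode h)
    {x y : Fin n → F} (hx : x ∈ componentCoset h i u) (hyc : y ∈ parityCheckCode h)
    (hyn : y ∉ componentCoset h i u) :
    3 ≤ ((Finset.univ.filter fun j => x j ≠ y j) \ ({i} : Finset (Fin n))).card := by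
  classical
  have hxc : x ∈ parityCheckCode h := coset_subset_code hu hx
  set v := y - x with hv
  have hxy : x ≠ y := by rintro rfl; exact hyn hx
  have hv0 : v ≠ 0 := sub_ne_zero_of_ne (Ne.symm hxy)
  have hvc : v ∈ parityCheckCode h := (parityCheckCode h).sub_mem hyc hxc
  have hN3 : 3 ≤ hammingNorm v := minweight hnz hnp hvc hv0
  have claim1 : ¬(hammingNorm v = 3 ∧ v i ≠ 0) := by
    rintro ⟨h3, hvi⟩
    apply hyn
    have := coset_add_mem hx (wt3_mem_principal hvc h3 hvi)
    simpa [hv] using this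
  have hfilter : (Finset.univ.filter fun j => x j ≠ y j) =
      (Finset.univ.filter (v · ≠ 0)) := by
    congr 1; ext k
    simp [hv, sub_ne_zero, ne_comm]
  rw [hfilter]
  set S := Finset.univ.filter (v · ≠ 0) with hS
  have hcardS : S.card = hammingNorm v := rfl
  by_cases h4 : 4 ≤ hammingNorm v
  · have h1 : S.card - 1 ≤ (S \ ({i} : Finset (Fin n))).card := by
      have := Finset.le_card_sdiff ({i} : Finset (Fin n)) S
      simpa using this
    omega
  · have hNv : hammingNorm v = 3 := by omega
    have hvi : v i = 0 := by
      by_contra hvi; exact claim1 ⟨hNv, hvi⟩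
    have : S \ ({i} : Finset (Fin n)) = S := by
      apply Finset.sdiff_eq_self_of_disjoint
      rw [Finset.disjoint_right]
      intro k hk
      simp only [Finset.mem_singleton] at hk
      subst hk; simp [hS, hvi]
    rw [this]; omega

end Keys

section ApplyAt
variable {h : Fin n → Fin m → F}

lemma applyAt_apply_ne (i : Fin n) (σ : Equiv.Perm F) (x : Fin n → F) {k : Fin n}
    (hk : k ≠ i) : applyAt i σ x k = x k := Function.update_of_ne hk _ _

lemma applyAt_apply_self (i : Fin n) (σ : Equiv.Perm F) (x : Fin n → F) :
    applyAt i σ x i = σ (x i) := Function.update_self _ _ _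

lemma applyAt_injective (i : Fin n) (σ : Equiv.Perm F) :
    Function.Injective (applyAt i σ) := by
  intro x y hxy
  funext k
  by_cases hk : k = i
  · subst hk
    have := congrFun hxy k
    rw [applyAt_apply_self, applyAt_apply_self] at this
    exact σ.injective this
  · have := congrFun hxy k
    rwa [applyAt_apply_ne i σ x hk, applyAt_apply_ne i σ y hk] at this

lemma hammingDist_applyAt (i : Fin n) (σ : Equiv.Perm F) (x y : Fin n → F) :
    hammingDist (applyAt i σ x) (applyAt i σ y) = hammingDist x y := by
  show (Finset.univ.filter _).card = (Finset.univ.filter _).card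
  congr 1
  ext k
  by_cases hk : k = i
  · subst hk
    simp [applyAt_apply_self, σ.injective.ne_iff]
  · simp [applyAt_apply_ne i σ _ hk]

lemma hammingDist_def (x y : Fin n → F) :
    hammingDist x y = (Finset.univ.filter fun j => x j ≠ y j).card := rfl

lemma dist_ge_of_card {x y x' y' : Fin n → F} {T : Finset (Fin n)}
    (hx : ∀ k, k ∉ T → x' k = x k) (hy : ∀ k, k ∉ T → y' k = y k)
    (hcard : 3 ≤ ((Finset.univ.filter fun j => x j ≠ y j) \ T).card) :
    3 ≤ hammingDist x' y' := by
  rw [hammingDist_def]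
  refine le_trans hcard (Finset.card_le_card ?_)
  intro k hk
  simp only [Finset.mem_sdiff, Finset.mem_filter, Finset.mem_univ, true_and] at hk ⊢
  rw [hx k hk.2, hy k hk.2]
  exact hk.1

end ApplyAt

lemma ncard_iUnion_fin {α : Type*} {t : ℕ} (S : Fin t → Set α) (hfin : ∀ s, (S s).Finite)
    (hd : ∀ s s', s ≠ s' → Disjoint (S s) (S s')) :
    (⋃ s, S s).ncard = ∑ s, (S s).ncard := by
  classical
  have he : (⋃ s, S s) = ↑(Finset.univ.biUnion fun s => (hfin s).toFinset) := by
    ext x; simp [Set.Finite.mem_toFinset]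
  rw [he, Set.ncard_coe_finset, Finset.card_biUnion]
  · exact Finset.sum_congr rfl fun s _ => (Set.ncard_eq_toFinset_card _ (hfin s)).symm
  · intro s _ s' hs' hss
    rw [Function.onFun, Set.Finite.disjoint_toFinset]
    exact hd s s' hss

section Card
variable (h : Fin n → Fin m → F)

/-- the parity check map as a linear map -/
def chk : (Fin n → F) →ₗ[F] (Fin m → F) :=
  ∑ j, LinearMap.smulRight (LinearMap.proj j) (h j)

lemma chk_apply (x : Fin n → F) : chk h x = ∑ j, x j • h j := by
  simp [chk, LinearMap.sum_apply]

lemma ker_chk : LinearMap.ker (chk h) = parityCheckCode h := by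
  ext x
  rw [LinearMap.mem_ker, chk_apply]
  exact Iff.rfl

lemma chk_surjective (hcover : ∀ z : Fin m → F, z ≠ 0 → ∃ j, ∃ c : F, z = c • h j) :
    Function.Surjective (chk h) := by
  intro z
  by_cases hz : z = 0
  · exact ⟨0, by rw [map_zero, hz]⟩
  · obtain ⟨j, c, hjc⟩ := hcover z hz
    refine ⟨Pi.single j c, ?_⟩
    rw [chk_apply, hjc]
    rw [Finset.sum_eq_single j]
    · simp
    · intro k _ hk; simp [Pi.single_apply, hk]
    · simp

lemma card_code (hcover : ∀ z : Fin m → F, z ≠ 0 → ∃ j, ∃ c : F, z = c • h j)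
    (hnm : m ≤ n) :
    Nat.card (parityCheckCode h) = Fintype.card F ^ (n - m) := by
  have h1 := Submodule.card_eq_card_quotient_mul_card (parityCheckCode h)
  have e : ((Fin n → F) ⧸ parityCheckCode h) ≃ₗ[F] (Fin m → F) := by
    rw [← ker_chk]
    exact LinearMap.quotKerEquivOfSurjective (chk h) (chk_surjective h hcover)
  have h2 : Nat.card ((Fin n → F) ⧸ parityCheckCode h) = Fintype.card F ^ m := by
    rw [Nat.card_congr e.toEquiv, Nat.card_eq_fintype_card, Fintype.card_fun,
      Fintype.card_fin]
  have h3 : Nat.card (Fin n → F) = Fintype.card F ^ n := by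
    rw [Nat.card_eq_fintype_card, Fintype.card_fun, Fintype.card_fin]
  rw [h2, h3] at h1
  have hq : Fintype.card F ^ m ≠ 0 := by
    positivity
  have : Fintype.card F ^ (n - m) * Fintype.card F ^ m = Fintype.card F ^ n := by
    rw [← pow_add, Nat.sub_add_cancel hnm]
  rw [← this, mul_comm (Nat.card _), mul_comm (Fintype.card F ^ (n-m))] at h1
  exact (Nat.eq_of_mul_eq_mul_left (Nat.pos_of_ne_zero hq) h1).symm

lemma m_le_n (hcover : ∀ z : Fin m → F, z ≠ 0 → ∃ j, ∃ c : F, z = c • h j) : m ≤ n := by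
  have hsurj := chk_surjective h hcover
  have hcard : Fintype.card (Fin m → F) ≤ Fintype.card (Fin n → F) :=
    Fintype.card_le_of_surjective _ hsurj
  rw [Fintype.card_fun, Fintype.card_fun, Fintype.card_fin, Fintype.card_fin] at hcard
  have hq : 1 < Fintype.card F := Fintype.one_lt_card
  exact (Nat.pow_le_pow_iff_right hq).mp hcard

end Card

/-- switching an admissible family.  If the cosets
`R_{i_1}+u_1, …, R_{i_t}+u_t` (each `u_s ∈ H_{q,m}`) are pairwise disjoint and
`σ_1,…,σ_t` are permutations of `F_q`, then
`C = (H_{q,m} \ ∪_s (R_{i_s}+u_s)) ∪ (∪_s σ_s(R_{i_s}+u_s))` is a `q`-ary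
1-perfect code of length `n`: minimum distance at least 3 and `|C| = q^{n−m}`. -/
theorem switching_admissible_family
    (h : Fin n → Fin m → F) (hm : 2 ≤ m)
    (hn : n = (Fintype.card F ^ m - 1) / (Fintype.card F - 1))
    (hnz : ∀ j, h j ≠ 0)
    (hnp : ∀ j k, j ≠ k → ∀ c : F, h j ≠ c • h k)
    (hcover : ∀ z : Fin m → F, z ≠ 0 → ∃ j, ∃ c : F, z = c • h j)
    {t : ℕ} (idx : Fin t → Fin n) (u : Fin t → (Fin n → F))
    (hu : ∀ s, u s ∈ parityCheckCode h)
    (hadm : ∀ s s', s ≠ s' →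
      Disjoint (componentCoset h (idx s) (u s)) (componentCoset h (idx s') (u s')))
    (σ : Fin t → Equiv.Perm F) :
    (∀ x ∈ (((parityCheckCode h : Set (Fin n → F)) \ ⋃ s, componentCoset h (idx s) (u s)) ∪
             ⋃ s, applyAt (idx s) (σ s) '' componentCoset h (idx s) (u s)),
     ∀ y ∈ (((parityCheckCode h : Set (Fin n → F)) \ ⋃ s, componentCoset h (idx s) (u s)) ∪
             ⋃ s, applyAt (idx s) (σ s) '' componentCoset h (idx s) (u s)),
       x ≠ y → 3 ≤ hammingDist x y) ∧
    Nat.card (((parityCheckCode h : Set (Fin n → F)) \ ⋃ s, componentCoset h (idx s) (u s)) ∪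
             ⋃ s, applyAt (idx s) (σ s) '' componentCoset h (idx s) (u s) : Set (Fin n → F)) =
      Fintype.card F ^ (n - m) := by
  classical
  set Cs : Fin t → Set (Fin n → F) := fun s => componentCoset h (idx s) (u s) with hCs
  set Bs : Fin t → Set (Fin n → F) := fun s => applyAt (idx s) (σ s) '' Cs s with hBs
  set U : Set (Fin n → F) := ⋃ s, Cs s with hU
  set B : Set (Fin n → F) := ⋃ s, Bs s with hB
  set A : Set (Fin n → F) := (parityCheckCode h : Set (Fin n → F)) \ U with hA
  -- mixed pairs
  have hABdist : ∀ a ∈ A, ∀ b ∈ B, 3 ≤ hammingDist a b := by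
    rintro a ⟨hac, haU⟩ b hbB
    rw [hB] at hbB
    obtain ⟨s, hs⟩ := Set.mem_iUnion.mp hbB
    obtain ⟨b0, hb0, rfl⟩ := hs
    have hyn : a ∉ Cs s := fun hc => haU (Set.mem_iUnion.mpr ⟨s, hc⟩)
    have hkey := keyB hnz hnp (hu s) hb0 hac hyn
    have := dist_ge_of_card (T := ({idx s} : Finset (Fin n)))
      (x := b0) (y := a) (x' := applyAt (idx s) (σ s) b0) (y' := a)
      (fun k hk => applyAt_apply_ne _ _ _ (by simpa using hk)) (fun k _ => rfl) hkey
    rwa [hammingDist_comm] at this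
  -- pairs from different switched cosets
  have hBBdist : ∀ s s', s ≠ s' → ∀ a ∈ Bs s, ∀ b ∈ Bs s', 3 ≤ hammingDist a b := by
    intro s s' hss a ha b hb
    obtain ⟨x0, hx0, rfl⟩ := ha
    obtain ⟨y0, hy0, rfl⟩ := hb
    have hkey := keyA hnz hnp hcover (hu s) (hu s') (hadm s s' hss) hx0 hy0
    exact dist_ge_of_card (T := ({idx s, idx s'} : Finset (Fin n)))
      (x := x0) (y := y0)
      (fun k hk => applyAt_apply_ne _ _ _ (by simp at hk; exact fun e => hk.1 e))
      (fun k hk => applyAt_apply_ne _ _ _ (by simp at hk; exact fun e => hk.2 e)) hkey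
  constructor
  · -- minimum distance
    intro x hx y hy hxy
    rcases hx with hx | hxB
    · rcases hy with hy | hyB
      · rw [hammingDist_comm, hammingDist_eq_hammingNorm, neg_add_eq_sub]
        exact minweight hnz hnp ((parityCheckCode h).sub_mem hx.1 hy.1)
          (sub_ne_zero_of_ne hxy)
      · exact hABdist x hx y hyB
    · rcases hy with hy | hyB
      · rw [hammingDist_comm]
        exact hABdist y hy x hxB
      · obtain ⟨s, hs⟩ := Set.mem_iUnion.mp hxB
        obtain ⟨s', hs'⟩ := Set.mem_iUnion.mp hyB
        by_cases hss : s = s'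
        · subst hss
          obtain ⟨x0, hx0, rfl⟩ := hs
          obtain ⟨y0, hy0, rfl⟩ := hs'
          have hx0y0 : x0 ≠ y0 := fun e => hxy (by rw [e])
          rw [hammingDist_applyAt, hammingDist_comm, hammingDist_eq_hammingNorm, neg_add_eq_sub]
          exact minweight hnz hnp
            ((parityCheckCode h).sub_mem (coset_subset_code (hu s) hx0)
              (coset_subset_code (hu s) hy0)) (sub_ne_zero_of_ne hx0y0)
        · exact hBBdist s s' hss _ hs _ hs'
  · -- cardinality
    have hUsub : U ⊆ (parityCheckCode h : Set (Fin n → F)) :=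
      Set.iUnion_subset fun s => coset_subset_code (hu s)
    have hABdisj : Disjoint A B := by
      rw [Set.disjoint_left]
      intro z hzA hzB
      have := hABdist z hzA z hzB
      simp [hammingDist_self] at this
    have hBsdisj : ∀ s s', s ≠ s' → Disjoint (Bs s) (Bs s') := by
      intro s s' hss
      rw [Set.disjoint_left]
      intro z hz hz'
      have := hBBdist s s' hss z hz z hz'
      simp [hammingDist_self] at this
    have h1 : Nat.card (A ∪ B : Set (Fin n → F)) = (A ∪ B).ncard :=
      Nat.card_coe_set_eq _
    have h2 : (A ∪ B).ncard = A.ncard + B.ncard :=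
      Set.ncard_union_eq hABdisj (Set.toFinite _) (Set.toFinite _)
    have h3 : B.ncard = ∑ s, (Bs s).ncard :=
      ncard_iUnion_fin Bs (fun s => Set.toFinite _) hBsdisj
    have h4 : ∀ s, (Bs s).ncard = (Cs s).ncard := fun s =>
      Set.ncard_image_of_injective _ (applyAt_injective _ _)
    have h5 : U.ncard = ∑ s, (Cs s).ncard :=
      ncard_iUnion_fin Cs (fun s => Set.toFinite _) hadm
    have h6 : A.ncard + U.ncard = (parityCheckCode h : Set (Fin n → F)).ncard :=
      Set.ncard_diff_add_ncard_of_subset hUsub (Set.toFinite _)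
    have h7 : (parityCheckCode h : Set (Fin n → F)).ncard =
        Fintype.card F ^ (n - m) := by
      rw [← Nat.card_coe_set_eq]
      exact card_code h hcover (m_le_n h hcover)
    have h8 : B.ncard = U.ncard := by
      rw [h3, h5]
      exact Finset.sum_congr rfl fun s _ => h4 s
    rw [h1, h2, h8, ← h7, ← h6]
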